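/- arXiv:1904.11668 — 2 statements merged into one kernel-verified Lean document; each statement's English description precedes it below -/
import Mathlib

section
/- Let (M, 𝒜) be an uncertainty matroid on a finite ground set E that admits a uniformly optimal basis. If e ∈ E is blue (resp. red), then there exists a uniformly optimal basis T of (M, 𝒜) with e ∈ T (resp. e ∉ T). -/
open Matroid

variable {α : Type*}

/-- `A` is an uncertainty area function for `M`: each element of the ground set gets a
nonempty bounded set of reals. -/
def IsAreaFun (M : Matroid α) (A : α → Set ℝ) : Prop :=
  ∀ e ∈ M.E, (A e).Nonempty ∧ BddBelow (A e) ∧ BddAbove (A e)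

/-- A realization: a weight function with `w e ∈ A e` for every element of the ground set. -/
def Realization (M : Matroid α) (A : α → Set ℝ) (w : α → ℝ) : Prop :=
  ∀ e ∈ M.E, w e ∈ A e

/-- The total `w`-weight of a set. -/
noncomputable def setWeight (w : α → ℝ) (T : Set α) : ℝ := ∑ᶠ e ∈ T, w e

/-- A `w`-basis: a basis of `M` of minimum total `w`-weight. -/
def IsMinBasis (M : Matroid α) (w : α → ℝ) (T : Set α) : Prop :=
  M.IsBase T ∧ ∀ B, M.IsBase B → setWeight w T ≤ setWeight w B

/-- A uniformly optimal basis (an `A`-basis): a `w`-basis for every realization `w`. -/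
def IsUOB (M : Matroid α) (A : α → Set ℝ) (T : Set α) : Prop :=
  ∀ w, Realization M A w → IsMinBasis M w T

/-- An element is certain if its area is a singleton. -/
def Certain (A : α → Set ℝ) (e : α) : Prop := ∃ r : ℝ, A e = {r}

/-- `e` is blue if every realization admits a minimum weight basis containing `e`. -/
def Blue (M : Matroid α) (A : α → Set ℝ) (e : α) : Prop :=
  ∀ w, Realization M A w → ∃ T, IsMinBasis M w T ∧ e ∈ T

/-- `e` is red if every realization admits a minimum weight basis avoiding `e`. -/
def Red (M : Matroid α) (A : α → Set ℝ) (e : α) : Prop :=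
  ∀ w, Realization M A w → ∃ T, IsMinBasis M w T ∧ e ∉ T

/-- `e` is colored if it is blue or red. -/
def Colored (M : Matroid α) (A : α → Set ℝ) (e : α) : Prop :=
  Blue M A e ∨ Red M A e

open Set

/-- Weight of an exchanged basis. -/
lemma setWeight_exchange (w : α → ℝ) {T : Set α} (hT : T.Finite) {a b : α}
    (ha : a ∉ T) (hb : b ∈ T) :
    setWeight w (insert a (T \ {b})) = setWeight w T - w b + w a := by
  have hb' : b ∉ T \ {b} := fun h => h.2 rfl
  have ha' : a ∉ T \ {b} := fun h => ha h.1
  have h1 : setWeight w (insert a (T \ {b})) = w a + setWeight w (T \ {b}) :=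
    finsum_mem_insert w ha' hT.diff
  have hTeq : T = insert b (T \ {b}) := by
    rw [insert_diff_singleton, insert_eq_of_mem hb]
  have h2 : setWeight w T = w b + setWeight w (T \ {b}) := by
    nth_rewrite 1 [hTeq]
    exact finsum_mem_insert w hb' hT.diff
  rw [h1, h2]; ring

/-- Exchange characterization via closure. -/
lemma exch_iff (M : Matroid α) {T : Set α} (hT : M.IsBase T) {a b : α}
    (ha : a ∉ T) (haE : a ∈ M.E) (hb : b ∈ T) :
    M.IsBase (insert a (T \ {b})) ↔ a ∉ M.closure (T \ {b}) := by
  have hind : M.Indep (T \ {b}) := hT.indep.subset diff_subset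
  have hab : a ∉ T \ {b} := fun h => ha h.1
  constructor
  · intro hB
    exact (((hind.insert_indep_iff_of_notMem hab).1 hB.indep).2)
  · intro hcl
    exact hT.exchange_isBase_of_indep ha
      ((hind.insert_indep_iff_of_notMem hab).2 ⟨haE, hcl⟩)

/-- The fundamental-circuit fact in closure language: if `T` is a base and `e ∈ M.E \ T`,
then `e` is in the closure of the set of elements `f` of `T` with `e ∉ cl (T \ {f})`. -/
lemma mem_closure_fundCandidates (M : Matroid α) {T : Set α} (hT : M.IsBase T)
    {e : α} (he : e ∈ M.E) (heT : e ∉ T) :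
    e ∈ M.closure {f ∈ T | e ∉ M.closure (T \ {f})} := by
  set S : Set α := {f ∈ T | e ∉ M.closure (T \ {f})} with hSdef
  set N : Set α := {f ∈ T | e ∈ M.closure (T \ {f})} with hNdef
  rcases N.eq_empty_or_nonempty with hN | hN
  · have hST : S = T := by
      apply Subset.antisymm (fun f hf => hf.1)
      intro f hf
      refine ⟨hf, fun hcl => ?_⟩
      rw [eq_empty_iff_forall_notMem] at hN
      exact hN f ⟨hf, hcl⟩
    rw [hST, hT.closure_eq]; exact he
  · set Js : Set (Set α) := (fun f => T \ {f}) '' N with hJs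
    have hJsne : Js.Nonempty := hN.image _
    have hsub : ∀ J ∈ Js, J ⊆ T := by rintro J ⟨f, hf, rfl⟩; exact diff_subset
    have hInter : ⋂₀ Js = S := by
      ext x
      simp only [mem_sInter, hJs, mem_image, forall_exists_index, and_imp]
      constructor
      · intro hx
        obtain ⟨f₁, hf₁⟩ := hN
        have hxT : x ∈ T := (hx _ f₁ hf₁ rfl).1
        refine ⟨hxT, fun hcl => ?_⟩
        exact (hx _ x ⟨hxT, hcl⟩ rfl).2 rfl
      · rintro ⟨hxT, hxcl⟩ J f hf rfl
        exact ⟨hxT, fun hxf => hxcl (by rw [show x = f from hxf]; exact hf.2)⟩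
    have hkey := hT.indep.closure_sInter_eq_biInter_closure_of_forall_subset hJsne hsub
    rw [hInter] at hkey
    rw [hkey, mem_iInter₂]
    rintro J ⟨f, hf, rfl⟩
    exact hf.2

lemma exists_realization (M : Matroid α) (A : α → Set ℝ) (hA : IsAreaFun M A) :
    ∃ w, Realization M A w := by
  classical
  refine ⟨fun x => if h : (A x).Nonempty then h.some else 0, fun x hx => ?_⟩
  have h := (hA x hx).1
  simp only [dif_pos h]
  exact h.some_mem

/-- If a uniformly optimal basis exists, each blue (resp. red) element is contained in
(resp. avoided by) some uniformly optimal basis. -/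
theorem blue_red_mem_uob (M : Matroid α) (A : α → Set ℝ)
    (hE : M.E.Finite) (hA : IsAreaFun M A)
    (hex : ∃ T, IsUOB M A T) (e : α) (he : e ∈ M.E) :
    (Blue M A e → ∃ T, IsUOB M A T ∧ e ∈ T) ∧
    (Red M A e → ∃ T, IsUOB M A T ∧ e ∉ T) := by
  classical
  obtain ⟨T, hT⟩ := hex
  obtain ⟨w₀, hw₀⟩ := exists_realization M A hA
  have hTb : M.IsBase T := (hT w₀ hw₀).1
  have hTE : T ⊆ M.E := hTb.subset_ground
  have hTfin : T.Finite := hE.subset hTE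
  constructor
  · -- Blue case
    intro hblue
    by_cases heT : e ∈ T
    · exact ⟨T, hT, heT⟩
    set S : Set α := {f ∈ T | e ∉ M.closure (T \ {f})} with hSdef
    have hSsubT : S ⊆ T := fun f hf => hf.1
    have hSE : S ⊆ M.E := hSsubT.trans hTE
    have hSfin : S.Finite := hTfin.subset hSsubT
    have hclaim : ∃ f ∈ S, sSup (A e) ≤ sInf (A f) := by
      by_contra hcon
      push_neg at hcon
      have hy : ∀ f ∈ S, ∃ y ∈ A f, y < sSup (A e) := fun f hf =>
        exists_lt_of_csInf_lt (hA f (hSE hf)).1 (hcon f hf)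
      choose! y hyA hylt using hy
      have hx : ∃ x ∈ A e, ∀ f ∈ S, y f < x := by
        rcases S.eq_empty_or_nonempty with h | h
        · obtain ⟨x, hxA⟩ := (hA e he).1
          exact ⟨x, hxA, by simp [h]⟩
        · have himg : (y '' S).Nonempty := h.image y
          have hfinimg : (y '' S).Finite := hSfin.image y
          have hmmem : sSup (y '' S) ∈ y '' S := himg.csSup_mem hfinimg
          obtain ⟨g, hgS, hgeq⟩ := hmmem
          have hm : sSup (y '' S) < sSup (A e) := by rw [← hgeq]; exact hylt g hgS
          obtain ⟨x, hxA, hxgt⟩ := exists_lt_of_lt_csSup (hA e he).1 hm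
          refine ⟨x, hxA, fun f hf => lt_of_le_of_lt ?_ hxgt⟩
          exact le_csSup hfinimg.bddAbove (mem_image_of_mem y hf)
      obtain ⟨x, hxA, hxgt⟩ := hx
      set w : α → ℝ := fun z => if z = e then x else if z ∈ S then y z else w₀ z with hwdef
      have hwe : w e = x := by simp [hwdef]
      have hwf : ∀ f ∈ S, w f = y f := by
        intro f hf
        have hfe : f ≠ e := fun h => heT (h ▸ hf.1)
        simp [hwdef, hfe, hf]
      have hwreal : Realization M A w := by
        intro z hz
        by_cases h1 : z = e
        · subst h1; rw [hwe]; exact hxA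
        by_cases h2 : z ∈ S
        · rw [hwf z h2]; exact hyA z h2
        · simp only [hwdef, if_neg h1, if_neg h2]; exact hw₀ z hz
      obtain ⟨B, hBmin, heB⟩ := hblue w hwreal
      have hBb := hBmin.1
      have hBE : B ⊆ M.E := hBb.subset_ground
      have hBfin : B.Finite := hE.subset hBE
      have hf0 : ∃ f₀ ∈ S, f₀ ∉ M.closure (B \ {e}) := by
        by_contra hcon2
        push_neg at hcon2
        have h1 : e ∈ M.closure S := mem_closure_fundCandidates M hTb he heT
        have h2 : M.closure S ⊆ M.closure (B \ {e}) :=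
          M.closure_subset_closure_of_subset_closure hcon2
        exact hBb.indep.notMem_closure_diff_of_mem heB (h2 h1)
      obtain ⟨f₀, hf₀S, hf₀cl⟩ := hf0
      have hf₀T : f₀ ∈ T := hf₀S.1
      have hf₀e : f₀ ≠ e := fun h => heT (h ▸ hf₀T)
      have hf₀B : f₀ ∉ B := fun h =>
        hf₀cl (M.mem_closure_of_mem ⟨h, hf₀e⟩ (diff_subset.trans hBE))
      have hindep : M.Indep (insert f₀ (B \ {e})) := by
        rw [(hBb.indep.subset diff_subset).insert_indep_iff_of_notMem
          (fun h => hf₀B h.1)]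
        exact ⟨hTE hf₀T, hf₀cl⟩
      have hB' : M.IsBase (insert f₀ (B \ {e})) := hBb.exchange_isBase_of_indep hf₀B hindep
      have hle := hBmin.2 _ hB'
      rw [setWeight_exchange w hBfin hf₀B heB] at hle
      have hlt : w f₀ < w e := by rw [hwf f₀ hf₀S, hwe]; exact hxgt f₀ hf₀S
      linarith
    obtain ⟨f, hfS, hkey⟩ := hclaim
    have hfT : f ∈ T := hfS.1
    have hT'b : M.IsBase (insert e (T \ {f})) :=
      (exch_iff M hTb heT he hfT).2 hfS.2
    refine ⟨insert e (T \ {f}), fun w hwreal => ⟨hT'b, fun B hB => ?_⟩, mem_insert _ _⟩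
    have h1 := (hT w hwreal).2 B hB
    have h2 : w e ≤ w f := by
      calc w e ≤ sSup (A e) := le_csSup (hA e he).2.2 (hwreal e he)
        _ ≤ sInf (A f) := hkey
        _ ≤ w f := csInf_le (hA f (hTE hfT)).2.1 (hwreal f (hTE hfT))
    rw [setWeight_exchange w hTfin heT hfT]
    linarith
  · -- Red case
    intro hred
    by_cases heT : e ∈ T
    swap
    · exact ⟨T, hT, heT⟩
    have heH : e ∉ M.closure (T \ {e}) := hTb.indep.notMem_closure_diff_of_mem heT
    set S : Set α := {f | f ∈ M.E ∧ f ∉ T ∧ M.IsBase (insert f (T \ {e}))} with hSdef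
    have hSE : S ⊆ M.E := fun f hf => hf.1
    have hSfin : S.Finite := hE.subset hSE
    have heS : e ∉ S := fun h => h.2.1 heT
    have hclaim : ∃ f ∈ S, sSup (A f) ≤ sInf (A e) := by
      by_contra hcon
      push_neg at hcon
      have hx : ∃ x ∈ A e, ∀ f ∈ S, x < sSup (A f) := by
        rcases S.eq_empty_or_nonempty with h | h
        · obtain ⟨x, hxA⟩ := (hA e he).1
          exact ⟨x, hxA, by simp [h]⟩
        · have himg : ((fun f => sSup (A f)) '' S).Nonempty := h.image _
          have hfinimg : ((fun f => sSup (A f)) '' S).Finite := hSfin.image _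
          have hmmem := himg.csInf_mem hfinimg
          obtain ⟨g, hgS, hgeq⟩ := hmmem
          have hm : sInf (A e) < sInf ((fun f => sSup (A f)) '' S) := by
            rw [← hgeq]; exact hcon g hgS
          obtain ⟨x, hxA, hxlt⟩ := exists_lt_of_csInf_lt (hA e he).1 hm
          refine ⟨x, hxA, fun f hf => lt_of_lt_of_le hxlt ?_⟩
          exact csInf_le hfinimg.bddBelow (mem_image_of_mem _ hf)
      obtain ⟨x, hxA, hxlt⟩ := hx
      have hy : ∀ f ∈ S, ∃ y ∈ A f, x < y := fun f hf =>
        exists_lt_of_lt_csSup (hA f (hSE hf)).1 (hxlt f hf)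
      choose! y hyA hylt using hy
      set w : α → ℝ := fun z => if z = e then x else if z ∈ S then y z else w₀ z with hwdef
      have hwe : w e = x := by simp [hwdef]
      have hwf : ∀ f ∈ S, w f = y f := by
        intro f hf
        have hfe : f ≠ e := fun h => heS (h ▸ hf)
        simp [hwdef, hfe, hf]
      have hwreal : Realization M A w := by
        intro z hz
        by_cases h1 : z = e
        · subst h1; rw [hwe]; exact hxA
        by_cases h2 : z ∈ S
        · rw [hwf z h2]; exact hyA z h2
        · simp only [hwdef, if_neg h1, if_neg h2]; exact hw₀ z hz
      obtain ⟨B, hBmin, heB⟩ := hred w hwreal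
      have hBb := hBmin.1
      have hBE : B ⊆ M.E := hBb.subset_ground
      have hBfin : B.Finite := hE.subset hBE
      -- find f₀ ∈ S with e ∉ cl (B \ {f₀}) and f₀ ∈ B
      set C' : Set α := {g ∈ B | e ∉ M.closure (B \ {g})} with hC'def
      have heC' : e ∈ M.closure C' := mem_closure_fundCandidates M hBb he heB
      have hf0 : ∃ f₀ ∈ C', f₀ ∈ S := by
        by_contra hcon2
        push_neg at hcon2
        have hC'H : C' ⊆ M.closure (T \ {e}) := by
          intro g hg
          have hgB : g ∈ B := hg.1
          have hge : g ≠ e := fun h => heB (h ▸ hgB)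
          by_cases hgT : g ∈ T
          · exact M.mem_closure_of_mem ⟨hgT, hge⟩ (diff_subset.trans hTE)
          · by_contra hgcl
            exact hcon2 g hg ⟨hBE hgB, hgT,
              (exch_iff M hTb hgT (hBE hgB) heT).2 hgcl⟩
        have := M.closure_subset_closure_of_subset_closure hC'H heC'
        exact heH this
      obtain ⟨f₀, hf₀C', hf₀S⟩ := hf0
      have hf₀B : f₀ ∈ B := hf₀C'.1
      have hf₀e : f₀ ≠ e := fun h => heB (h ▸ hf₀B)
      have heB' : e ∉ B \ {f₀} := fun h => heB h.1
      have hindep : M.Indep (insert e (B \ {f₀})) := by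
        rw [(hBb.indep.subset diff_subset).insert_indep_iff_of_notMem heB']
        exact ⟨he, hf₀C'.2⟩
      have hB' : M.IsBase (insert e (B \ {f₀})) := hBb.exchange_isBase_of_indep heB hindep
      have hle := hBmin.2 _ hB'
      rw [setWeight_exchange w hBfin heB hf₀B] at hle
      have hlt : w e < w f₀ := by rw [hwf f₀ hf₀S, hwe]; exact hylt f₀ hf₀S
      linarith
    obtain ⟨f, hfS, hkey⟩ := hclaim
    have hfT : f ∉ T := hfS.2.1
    have hT'b : M.IsBase (insert f (T \ {e})) := hfS.2.2
    have heT' : e ∉ insert f (T \ {e}) := by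
      intro h
      rcases h with h | h
      · exact hfT (h ▸ heT)
      · exact h.2 rfl
    refine ⟨insert f (T \ {e}), fun w hwreal => ⟨hT'b, fun B hB => ?_⟩, heT'⟩
    have h1 := (hT w hwreal).2 B hB
    have h2 : w f ≤ w e := by
      calc w f ≤ sSup (A f) := le_csSup (hA f (hfS.1)).2.2 (hwreal f hfS.1)
        _ ≤ sInf (A e) := hkey
        _ ≤ w e := csInf_le (hA e he).2.1 (hwreal e he)
    rw [setWeight_exchange w hTfin hfT heT]
    linarith
end

section
/- Let (M, 𝒜) be an uncertainty matroid on a finite ground set E and let e ∈ E be blue. Then T ⊆ E − e is a uniformly optimal basis of (M/e, 𝒜|_{E−e}) if and only if T + e is a uniformly optimal basis of (M, 𝒜). -/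
open Matroid

variable {α : Type*}

/-- Deletion of a set of elements from a matroid. -/
def Matroid.del (M : Matroid α) (D : Set α) : Matroid α := M ↾ (M.E \ D)

/-- Contraction of a set of elements in a matroid, defined by duality. -/
def Matroid.con (M : Matroid α) (C : Set α) : Matroid α := (M✶.del C)✶

lemma con_ground (M : Matroid α) (C : Set α) : (M.con C).E = M.E \ C := rfl

lemma con_base_iff (M : Matroid α) (e : α) (he : e ∈ M.E)
    (hne : ∃ B, M.IsBase B ∧ e ∈ B) (T : Set α) (hT : T ⊆ M.E \ {e}) :
    (M.con {e}).IsBase T ↔ M.IsBase (insert e T) := by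
  obtain ⟨B0, hB0, heB0⟩ := hne
  set R : Set α := M.E \ {e} with hRdef
  have hRsub : R ⊆ M✶.E := by rw [dual_ground]; exact Set.diff_subset
  have hspan : M✶.Spanning R := by
    refine (hB0.compl_isBase_dual.spanning).superset ?_ hRsub
    exact Set.diff_subset_diff_right (Set.singleton_subset_iff.2 heB0)
  have hstep1 : (M.con {e}).IsBase T ↔ (M✶ ↾ R).IsBase (R \ T) ∧ T ⊆ R := by
    rw [Matroid.con, Matroid.del, dual_isBase_iff']
    rfl
  have hstep2 : (M✶ ↾ R).IsBase (R \ T) ↔ M✶.IsBase (R \ T) := by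
    rw [isBase_restrict_iff (show R ⊆ M✶.E from hRsub)]
    constructor
    · intro h
      refine h.indep.isBase_of_spanning ?_
      rw [spanning_iff_closure_eq (h.indep.subset_ground)]
      rw [h.closure_eq_closure]
      exact hspan.closure_eq
    · intro h
      exact h.isBasis_of_subset hRsub Set.diff_subset
  have hset : M.E \ (R \ T) = insert e T := by
    ext x
    constructor
    · rintro ⟨hx, hx2⟩
      by_cases hxe : x = e
      · exact Or.inl hxe
      · right; by_contra hxT; exact hx2 ⟨⟨hx, hxe⟩, hxT⟩
    · rintro (rfl | hx)
      · exact ⟨he, fun hc ↦ hc.1.2 rfl⟩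
      · exact ⟨(hT hx).1, fun hc ↦ hc.2 hx⟩
  rw [hstep1, hstep2, and_iff_left hT,
    show M✶.IsBase (R \ T) ↔ M.IsBase (M.E \ (R \ T)) from
      dual_isBase_iff (Set.diff_subset.trans (show R ⊆ M.E from Set.diff_subset)), hset]

lemma setWeight_insert (w : α → ℝ) {e : α} {S : Set α} (heS : e ∉ S) (hS : S.Finite) :
    setWeight w (insert e S) = w e + setWeight w S :=
  finsum_mem_insert w heS hS

lemma setWeight_congr {w w' : α → ℝ} {S : Set α} (h : ∀ x ∈ S, w x = w' x) :
    setWeight w S = setWeight w' S :=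
  finsum_mem_congr rfl h

/-- Contracting a blue element preserves uniformly optimal bases. -/
theorem blue_contract_uob (M : Matroid α) (A : α → Set ℝ)
    (hE : M.E.Finite) (hA : IsAreaFun M A)
    (e : α) (he : e ∈ M.E) (hblue : Blue M A e)
    (T : Set α) (hT : T ⊆ M.E \ {e}) :
    IsUOB (M.con {e}) A T ↔ IsUOB M A (insert e T) := by
  classical
  -- a default realization
  have hw0 : Realization M A (fun x ↦ if h : (A x).Nonempty then h.choose else 0) := by
    intro x hx
    have h := (hA x hx).1
    simp only [dif_pos h]
    exact h.choose_spec
  obtain ⟨B0, hB0, heB0⟩ := hblue _ hw0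
  have hne : ∃ B, M.IsBase B ∧ e ∈ B := ⟨B0, hB0.1, heB0⟩
  have hcon := con_base_iff M e he hne
  have heT : e ∉ T := fun h ↦ (hT h).2 rfl
  have hTfin : T.Finite := hE.subset fun x hx ↦ (hT hx).1
  constructor
  · intro hU w hw
    have hw' : Realization (M.con {e}) A w := fun x hx ↦ hw x ((con_ground M {e} ▸ hx).1)
    obtain ⟨hTb, hTmin⟩ := hU w hw'
    refine ⟨(hcon T hT).1 hTb, ?_⟩
    intro B hB
    obtain ⟨B', ⟨hB'b, hB'min⟩, heB'⟩ := hblue w hw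
    have hB'sub : B' \ {e} ⊆ M.E \ {e} := Set.diff_subset_diff_left hB'b.subset_ground
    have hins : insert e (B' \ {e}) = B' := by
      rw [Set.insert_diff_singleton, Set.insert_eq_of_mem heB']
    have hB'con : (M.con {e}).IsBase (B' \ {e}) := by
      rw [hcon _ hB'sub, hins]; exact hB'b
    have hB'fin : (B' \ {e}).Finite := (hE.subset hB'b.subset_ground).subset Set.diff_subset
    have h1 : setWeight w T ≤ setWeight w (B' \ {e}) := hTmin _ hB'con
    calc setWeight w (insert e T) = w e + setWeight w T := setWeight_insert w heT hTfin
      _ ≤ w e + setWeight w (B' \ {e}) := by linarith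
      _ = setWeight w (insert e (B' \ {e})) :=
          (setWeight_insert w (fun h ↦ h.2 rfl) hB'fin).symm
      _ = setWeight w B' := by rw [hins]
      _ ≤ setWeight w B := hB'min B hB
  · intro hU w hw
    obtain ⟨r, hr⟩ : ∃ r, r ∈ A e := (hA e he).1
    set w' : α → ℝ := fun x ↦ if x = e then r else w x with hw'def
    have hw'real : Realization M A w' := by
      intro x hx
      by_cases hxe : x = e
      · subst hxe; simpa [hw'def] using hr
      · have : x ∈ (M.con {e}).E := by rw [con_ground]; exact ⟨hx, hxe⟩
        simpa [hw'def, hxe] using hw x this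
    obtain ⟨hTb, hTmin⟩ := hU w' hw'real
    refine ⟨(hcon T hT).2 hTb, ?_⟩
    intro B hB
    have hBsub : B ⊆ M.E \ {e} := hB.subset_ground
    have heB : e ∉ B := fun h ↦ (hBsub h).2 rfl
    have hBfin : B.Finite := hE.subset fun x hx ↦ (hBsub hx).1
    have hBb : M.IsBase (insert e B) := (hcon B hBsub).1 hB
    have h1 : setWeight w' (insert e T) ≤ setWeight w' (insert e B) := hTmin _ hBb
    rw [setWeight_insert w' heT hTfin, setWeight_insert w' heB hBfin] at h1
    have h2 : setWeight w' T ≤ setWeight w' B := by linarith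
    have hTeq : setWeight w' T = setWeight w T :=
      setWeight_congr fun x hx ↦ by
        have hxe : x ≠ e := fun h ↦ heT (h ▸ hx)
        simp [hw'def, hxe]
    have hBeq : setWeight w' B = setWeight w B :=
      setWeight_congr fun x hx ↦ by
        have hxe : x ≠ e := fun h ↦ heB (h ▸ hx)
        simp [hw'def, hxe]
    rw [hTeq, hBeq] at h2
    exact h2
end
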